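/- Let G be a connected cubic graph other than K_4, K_{3,3}, and the theta graph on two vertices, and let C be a shortest circuit of G. Then the set of edges with exactly one end on C is a cycle-separating edge cut of G, i.e., both G − V(C) and C contain circuits after the cut is removed; in particular G − V(C) contains a circuit. -/

import Mathlib

open SimpleGraph

set_option linter.unusedSectionVars false

section Aux
variable {V : Type*} [DecidableEq V] {G : SimpleGraph V}

/-- In a path starting at `a`, any edge containing `a` is the first edge. -/
lemma first_edge {a b y : V} {p : G.Walk a b} (hp : p.IsPath) (hy : s(a, y) ∈ p.edges) :
    ∃ (h : G.Adj a y) (q : G.Walk y b), p = SimpleGraph.Walk.cons h q := by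
  cases p with
  | nil => simp at hy
  | cons h q =>
    rename_i c
    rw [SimpleGraph.Walk.edges_cons, List.mem_cons] at hy
    rcases hy with hy | hy
    · rw [Sym2.eq_iff] at hy
      rcases hy with ⟨-, rfl⟩ | ⟨h1, h2⟩
      · exact ⟨h, q, rfl⟩
      · exact absurd (h1 ▸ h) G.irrefl
    · have := SimpleGraph.Walk.fst_mem_support_of_mem_edges q hy
      rw [SimpleGraph.Walk.cons_isPath_iff] at hp
      exact absurd this hp.2

lemma concat_isPath {a b z : V} {p : G.Walk a b} (hp : p.IsPath) (h : G.Adj b z)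
    (hz : z ∉ p.support) : (p.concat h).IsPath := by
  rw [← SimpleGraph.Walk.isPath_reverse_iff, SimpleGraph.Walk.reverse_concat]
  rw [SimpleGraph.Walk.cons_isPath_iff]
  exact ⟨hp.reverse, by simpa using hz⟩

open SimpleGraph.Walk in
/-- the endpoint of a nonnil closed walk is in the tail of its support. -/
lemma end_mem_tail_support {u : V} {c : G.Walk u u} (hc : ¬ c.Nil) : u ∈ c.support.tail := by
  have hd : c.darts ≠ [] := by
    intro h
    have : c.length = 0 := by
      have := congrArg List.length h
      simpa [SimpleGraph.Walk.length_darts] using this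
    exact hc (SimpleGraph.Walk.nil_iff_length_eq.2 this)
  have h2 : (c.darts.getLast hd).snd = u := by
    rw [SimpleGraph.Walk.getLast_darts_eq_lastDart]; rfl
  have h3 : (c.darts.getLast hd).snd ∈ c.support.tail := by
    rw [← SimpleGraph.Walk.map_snd_darts]
    exact List.mem_map_of_mem (List.getLast_mem hd)
  rwa [h2] at h3

lemma mem_tail_support_of_closed {u x : V} {c : G.Walk u u} (hc : ¬ c.Nil) :
    x ∈ c.support ↔ x ∈ c.support.tail := by
  constructor
  · intro h
    rw [SimpleGraph.Walk.support_eq_cons, List.mem_cons] at h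
    rcases h with rfl | h
    · exact end_mem_tail_support hc
    · exact h
  · intro h
    rw [SimpleGraph.Walk.support_eq_cons, List.mem_cons]
    exact Or.inr h

lemma mem_support_rotate {u x y : V} {c : G.Walk u u} (hc : c.IsCycle) (hx : x ∈ c.support) :
    (y ∈ (c.rotate x hx).support ↔ y ∈ c.support) := by
  have h1 : ¬ c.Nil := hc.not_nil
  have h2 : ¬ (c.rotate x hx).Nil := by
    rw [SimpleGraph.Walk.nil_iff_length_eq] at h1 ⊢
    intro h
    apply h1
    have := SimpleGraph.Walk.rotate_darts c x hx
    have hlen : (c.rotate x hx).length = c.length := by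
      rw [← SimpleGraph.Walk.length_darts, ← SimpleGraph.Walk.length_darts]
      exact this.perm.length_eq
    omega
  rw [mem_tail_support_of_closed h1, mem_tail_support_of_closed h2]
  exact (SimpleGraph.Walk.support_rotate c x hx).perm.mem_iff

lemma length_rotate' {u x : V} (c : G.Walk u u) (hx : x ∈ c.support) :
    (c.rotate x hx).length = c.length := by
  rw [← SimpleGraph.Walk.length_darts, ← SimpleGraph.Walk.length_darts]
  exact (SimpleGraph.Walk.rotate_darts c x hx).perm.length_eq

/-- Splitting a cycle at a vertex `y ≠ x` into two nontrivial paths. -/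
lemma cycle_split {x : V} {c : G.Walk x x} (hc : c.IsCycle) {y : V} (hy : y ∈ c.support)
    (hyx : y ≠ x) :
    ∃ (p1 : G.Walk x y) (p2 : G.Walk y x), p1.IsPath ∧ p2.IsPath ∧
      p1.length + p2.length = c.length ∧ 1 ≤ p1.length ∧ 1 ≤ p2.length ∧
      (∀ v, v ∈ p1.support → v ∈ c.support) ∧ (∀ v, v ∈ p2.support → v ∈ c.support) ∧
      (∀ e, e ∈ p1.edges → e ∈ c.edges) ∧ (∀ e, e ∈ p2.edges → e ∈ c.edges) := by
  cases c with
  | nil => exact absurd rfl hc.ne_nil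
  | cons h q =>
    rename_i v
    rw [SimpleGraph.Walk.cons_isCycle_iff] at hc
    obtain ⟨hq, hxv⟩ := hc
    have hy' : y ∈ q.support := by
      rcases List.mem_cons.mp (by simpa using hy) with h' | h'
      · exact absurd h' hyx
      · exact h'
    set q1 := q.takeUntil y hy' with hq1
    set q2 := q.dropUntil y hy' with hq2
    have hspec : q1.append q2 = q := q.take_spec hy'
    have hq1p : q1.IsPath := hq.takeUntil hy'
    have hq2p : q2.IsPath := hq.dropUntil hy'
    have hxq2 : x ∈ q2.support.tail := by
      have : x ∈ q2.support := SimpleGraph.Walk.end_mem_support q2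
      rw [SimpleGraph.Walk.support_eq_cons q2] at this
      rcases List.mem_cons.mp this with h' | h'
      · exact absurd h'.symm hyx
      · exact h'
    have hxq1 : x ∉ q1.support := by
      have hnd : q.support.Nodup := hq.support_nodup
      rw [← hspec, SimpleGraph.Walk.support_append] at hnd
      exact fun hx => (List.disjoint_of_nodup_append hnd) hx hxq2
    refine ⟨SimpleGraph.Walk.cons h q1, q2, ?_, hq2p, ?_, ?_, ?_, ?_, ?_, ?_, ?_⟩
    · rw [SimpleGraph.Walk.cons_isPath_iff]
      exact ⟨hq1p, hxq1⟩
    · have := congrArg SimpleGraph.Walk.length hspec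
      rw [SimpleGraph.Walk.length_append] at this
      simp only [SimpleGraph.Walk.length_cons]
      omega
    · simp
    · have : q2.length ≠ 0 := fun h0 => hyx (SimpleGraph.Walk.eq_of_length_eq_zero h0)
      omega
    · intro z hz
      rcases List.mem_cons.mp (by simpa using hz) with rfl | hz'
      · exact SimpleGraph.Walk.start_mem_support _
      · simp only [SimpleGraph.Walk.support_cons, List.mem_cons]
        exact Or.inr (SimpleGraph.Walk.support_takeUntil_subset q hy' hz')
    · intro z hz
      simp only [SimpleGraph.Walk.support_cons, List.mem_cons]
      exact Or.inr (SimpleGraph.Walk.support_dropUntil_subset q hy' hz)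
    · intro e he
      rcases List.mem_cons.mp (by simpa using he) with rfl | he'
      · simp
      · simp only [SimpleGraph.Walk.edges_cons, List.mem_cons]
        exact Or.inr (SimpleGraph.Walk.edges_takeUntil_subset q hy' he')
    · intro e he
      simp only [SimpleGraph.Walk.edges_cons, List.mem_cons]
      exact Or.inr (SimpleGraph.Walk.edges_dropUntil_subset q hy' he)

/-- In a shortest cycle, any edge of `G` joining two support vertices is an edge of the cycle. -/
lemma adj_support_mem_edges {u x y : V} {c : G.Walk u u} (hc : c.IsCycle)
    (hmin : ∀ (z : V) (d : G.Walk z z), d.IsCycle → c.length ≤ d.length)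
    (hx : x ∈ c.support) (hy : y ∈ c.support) (hadj : G.Adj x y) : s(x, y) ∈ c.edges := by
  by_contra hne
  have hyx : y ≠ x := fun h => G.irrefl (h ▸ hadj)
  set c' := c.rotate x hx with hc'
  have hc'cyc : c'.IsCycle := hc.rotate hx
  have hmemiff : ∀ z, z ∈ c'.support ↔ z ∈ c.support := fun z => mem_support_rotate hc hx
  have hedgeiff : ∀ e, e ∈ c'.edges ↔ e ∈ c.edges := fun e =>
    (SimpleGraph.Walk.rotate_edges c x hx).mem_iff
  have hlen : c'.length = c.length := length_rotate' c hx
  obtain ⟨p1, p2, hp1, hp2, hsum, h1len, h2len, hs1, hs2, he1, he2⟩ :=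
    cycle_split hc'cyc ((hmemiff y).mpr hy) hyx
  have hc1 : (SimpleGraph.Walk.cons hadj.symm p1).IsCycle := by
    rw [SimpleGraph.Walk.cons_isCycle_iff]
    refine ⟨hp1, fun h => hne ?_⟩
    rw [Sym2.eq_swap] at h
    exact (hedgeiff _).mp (he1 _ h)
  have hc2 : (SimpleGraph.Walk.cons hadj p2).IsCycle := by
    rw [SimpleGraph.Walk.cons_isCycle_iff]
    exact ⟨hp2, fun h => hne ((hedgeiff _).mp (he2 _ h))⟩
  have g1 := hmin _ _ hc1
  have g2 := hmin _ _ hc2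
  have g3 := hc.three_le_length
  simp only [SimpleGraph.Walk.length_cons] at g1 g2
  omega

/-- A vertex outside a shortest cycle of length ≥ 5 cannot have two neighbours on the cycle. -/
lemma no_two_nbrs_outside {u v x y : V} {c : G.Walk u u} (hc : c.IsCycle)
    (hmin : ∀ (z : V) (d : G.Walk z z), d.IsCycle → c.length ≤ d.length)
    (hlen5 : 5 ≤ c.length)
    (hv : v ∉ c.support) (hx : x ∈ c.support) (hy : y ∈ c.support) (hxy : x ≠ y)
    (ax : G.Adj v x) (ay : G.Adj v y) : False := by
  set c' := c.rotate x hx with hc'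
  have hc'cyc : c'.IsCycle := hc.rotate hx
  have hmemiff : ∀ z, z ∈ c'.support ↔ z ∈ c.support := fun z => mem_support_rotate hc hx
  have hlen : c'.length = c.length := length_rotate' c hx
  obtain ⟨p1, p2, hp1, hp2, hsum, h1len, h2len, hs1, hs2, he1, he2⟩ :=
    cycle_split hc'cyc ((hmemiff y).mpr hy) (Ne.symm hxy)
  have hvp1 : v ∉ p1.support := fun h => hv ((hmemiff v).mp (hs1 v h))
  have hvp2 : v ∉ p2.support := fun h => hv ((hmemiff v).mp (hs2 v h))
  have hc1 : (SimpleGraph.Walk.cons ax (p1.concat ay.symm)).IsCycle := by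
    rw [SimpleGraph.Walk.cons_isCycle_iff]
    refine ⟨concat_isPath hp1 ay.symm hvp1, ?_⟩
    rw [SimpleGraph.Walk.edges_concat, List.concat_eq_append, List.mem_append]
    rintro (h | h)
    · exact hvp1 (SimpleGraph.Walk.fst_mem_support_of_mem_edges p1 h)
    · simp only [List.mem_singleton, Sym2.eq_iff] at h
      rcases h with ⟨rfl, -⟩ | ⟨-, rfl⟩
      · exact hv hy
      · exact hxy rfl
  have hc2 : (SimpleGraph.Walk.cons ay (p2.concat ax.symm)).IsCycle := by
    rw [SimpleGraph.Walk.cons_isCycle_iff]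
    refine ⟨concat_isPath hp2 ax.symm hvp2, ?_⟩
    rw [SimpleGraph.Walk.edges_concat, List.concat_eq_append, List.mem_append]
    rintro (h | h)
    · exact hvp2 (SimpleGraph.Walk.fst_mem_support_of_mem_edges p2 h)
    · simp only [List.mem_singleton, Sym2.eq_iff] at h
      rcases h with ⟨rfl, -⟩ | ⟨-, rfl⟩
      · exact hv hx
      · exact hxy rfl
  have g1 := hmin _ _ hc1
  have g2 := hmin _ _ hc2
  simp only [SimpleGraph.Walk.length_cons, SimpleGraph.Walk.length_concat] at g1 g2
  omega

/-- Each vertex of a cycle has exactly two neighbours via the edges of the cycle. -/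
lemma two_nbrs_on_cycle {u x : V} {c : G.Walk u u} (hc : c.IsCycle) (hx : x ∈ c.support) :
    ∃ a b : V, a ≠ b ∧ a ∈ c.support ∧ b ∈ c.support ∧ G.Adj x a ∧ G.Adj x b ∧
      ∀ z, s(x, z) ∈ c.edges → z = a ∨ z = b := by
  set c' := c.rotate x hx with hcdef
  have hc'cyc : c'.IsCycle := hc.rotate hx
  have hmemiff : ∀ z, z ∈ c'.support ↔ z ∈ c.support := fun z => mem_support_rotate hc hx
  have hedgeiff : ∀ e, e ∈ c'.edges ↔ e ∈ c.edges := fun e =>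
    (SimpleGraph.Walk.rotate_edges c x hx).mem_iff
  have hlen : c'.length = c.length := length_rotate' c hx
  have h3 := hc.three_le_length
  clear_value c'
  cases c' with
  | nil => exact absurd rfl hc'cyc.ne_nil
  | cons h q =>
    rename_i a
    rw [SimpleGraph.Walk.cons_isCycle_iff] at hc'cyc
    obtain ⟨hq, hxa⟩ := hc'cyc
    have hqlen : 2 ≤ q.length := by
      simp only [SimpleGraph.Walk.length_cons] at hlen; omega
    -- decompose q.reverse to get the last neighbour b
    have hqrev : ¬ q.reverse.Nil := by
      rw [SimpleGraph.Walk.nil_iff_length_eq, SimpleGraph.Walk.length_reverse]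
      omega
    obtain ⟨b, h2, t, ht⟩ := SimpleGraph.Walk.not_nil_iff.mp hqrev
    have hb_mem : b ∈ q.support := by
      have : b ∈ q.reverse.support := by
        rw [ht]; simp
      rwa [SimpleGraph.Walk.support_reverse, List.mem_reverse] at this
    have hxb_rev : s(x, b) ∈ q.reverse.edges := by rw [ht]; simp
    have hxb : s(x, b) ∈ q.edges := by
      rwa [SimpleGraph.Walk.edges_reverse, List.mem_reverse] at hxb_rev
    have hab : a ≠ b := by
      rintro rfl
      exact hxa hxb
    refine ⟨a, b, hab, ?_, ?_, h, h2, ?_⟩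
    · rw [← hmemiff]; simp
    · rw [← hmemiff]; simp [hb_mem]
    · intro z hz
      rw [← hedgeiff] at hz
      simp only [SimpleGraph.Walk.edges_cons, List.mem_cons] at hz
      rcases hz with hz | hz
      · rw [Sym2.eq_iff] at hz
        rcases hz with ⟨-, rfl⟩ | ⟨h1, rfl⟩
        · exact Or.inl rfl
        · exact Or.inl (by rw [← h1] at h; exact absurd h G.irrefl)
      · -- edge of q containing x: by first_edge on q.reverse it is the first edge
        have hz' : s(x, z) ∈ q.reverse.edges := by
          rwa [SimpleGraph.Walk.edges_reverse, List.mem_reverse]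
        obtain ⟨h', q', hq'⟩ := first_edge (hq.reverse) hz'
        rw [ht] at hq'
        have := congrArg (fun w => w.getVert 1) hq'
        simp only [SimpleGraph.Walk.getVert_cons_succ, SimpleGraph.Walk.getVert_zero] at this
        exact Or.inr this.symm

/-- If some vertex `z` has an edge and every other vertex has degree at least 2,
then the graph contains a cycle. -/
lemma exists_cycle_of_min_degree {W : Type*} [Fintype W] [DecidableEq W] (H : SimpleGraph W)
    [DecidableRel H.Adj] {z b0 : W} (h0 : H.Adj z b0)
    (hdeg : ∀ v : W, v ≠ z → 2 ≤ H.degree v) :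
    ∃ (x : W) (c : H.Walk x x), c.IsCycle := by
  by_contra hno
  push_neg at hno
  have claim : ∀ n : ℕ, ∃ (b : W) (p : H.Walk z b), p.IsPath ∧ p.length = n + 1 := by
    intro n
    induction n with
    | zero =>
      refine ⟨b0, SimpleGraph.Walk.cons h0 SimpleGraph.Walk.nil, ?_, rfl⟩
      rw [SimpleGraph.Walk.cons_isPath_iff]
      exact ⟨SimpleGraph.Walk.IsPath.nil, by simp; exact h0.ne⟩
    | succ n ih =>
      obtain ⟨b, p, hp, hlen⟩ := ih
      have hbz : b ≠ z := by
        rintro rfl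
        have hnil : ¬ p.Nil := by rw [SimpleGraph.Walk.nil_iff_length_eq]; omega
        have := end_mem_tail_support hnil
        have hnd := hp.support_nodup
        rw [SimpleGraph.Walk.support_eq_cons] at hnd
        exact (List.nodup_cons.mp hnd).1 this
      have hdb : 2 ≤ H.degree b := hdeg b hbz
      rw [← SimpleGraph.card_neighborFinset_eq_degree] at hdb
      obtain ⟨y1, hy1, y2, hy2, hy12⟩ := Finset.one_lt_card.mp (show 1 < (H.neighborFinset b).card by omega)
      rw [SimpleGraph.mem_neighborFinset] at hy1 hy2
      -- if some neighbour of b is outside the support we can extend the path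
      by_cases hout : ∃ y, H.Adj b y ∧ y ∉ p.support
      · obtain ⟨y, hy, hys⟩ := hout
        exact ⟨y, p.concat hy, concat_isPath hp hy hys, by
          rw [SimpleGraph.Walk.length_concat]; omega⟩
      push_neg at hout
      -- otherwise every neighbour of b in the support equals `r.getVert 1`
      exfalso
      have key : ∀ y, H.Adj b y → y = p.reverse.getVert 1 := by
        intro y hy
        have hys : y ∈ p.reverse.support := by
          rw [SimpleGraph.Walk.support_reverse, List.mem_reverse]
          exact hout y hy
        set r := p.reverse with hrdef
        have hr : r.IsPath := hp.reverse
        have hr1 : (r.takeUntil y hys).IsPath := hr.takeUntil hys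
        have hnc := hno y (SimpleGraph.Walk.cons hy.symm (r.takeUntil y hys))
        rw [SimpleGraph.Walk.cons_isCycle_iff] at hnc
        push_neg at hnc
        have hedge : s(b, y) ∈ (r.takeUntil y hys).edges := by
          have := hnc hr1
          rwa [Sym2.eq_swap] at this
        obtain ⟨h', q', hq'⟩ := first_edge hr1 hedge
        have hspec := r.take_spec hys
        rw [hq'] at hspec
        rw [SimpleGraph.Walk.cons_append] at hspec
        have := congrArg (fun w => w.getVert 1) hspec
        simp only [SimpleGraph.Walk.getVert_cons_succ, SimpleGraph.Walk.getVert_zero] at this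
        exact this
      have e1 := key y1 hy1
      have e2 := key y2 hy2
      exact hy12 (e1.trans e2.symm)
  obtain ⟨b, p, hp, hlen⟩ := claim (Fintype.card W)
  have := hp.length_lt
  omega

instance instDecidableRelInduceAdj {W : Type*} (H : SimpleGraph W) [DecidableRel H.Adj]
    (s : Set W) : DecidableRel (H.induce s).Adj :=
  fun a b => inferInstanceAs (Decidable (H.Adj a b))

lemma degree_induce {W : Type*} [Fintype W] [DecidableEq W] (H : SimpleGraph W)
    [DecidableRel H.Adj] (s : Set W) [DecidablePred (· ∈ s)] (v : s) :
    (H.induce s).degree v = ((H.neighborFinset (v : W)).filter (· ∈ s)).card := by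
  rw [← SimpleGraph.card_neighborFinset_eq_degree]
  apply Finset.card_bij (fun (x : s) _ => (x : W))
  · intro a ha
    rw [SimpleGraph.mem_neighborFinset] at ha
    rw [Finset.mem_filter, SimpleGraph.mem_neighborFinset]
    exact ⟨ha, a.2⟩
  · intro a _ b _ h
    exact Subtype.coe_injective h
  · intro y hy
    rw [Finset.mem_filter, SimpleGraph.mem_neighborFinset] at hy
    exact ⟨⟨y, hy.2⟩, by rw [SimpleGraph.mem_neighborFinset]; exact hy.1, rfl⟩

universe u

lemma exists_cycle_of_card_le_edges_aux : ∀ (n : ℕ) (W : Type u) [Fintype W] [DecidableEq W]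
    (H : SimpleGraph W) [DecidableRel H.Adj], Fintype.card W = n → 0 < Fintype.card W →
    Fintype.card W ≤ H.edgeFinset.card → ∃ (x : W) (c : H.Walk x x), c.IsCycle := by
  intro n
  induction n using Nat.strong_induction_on with
  | _ n IH =>
  intro W _ _ H _ hn hpos hcard
  -- there is at least one edge, hence two distinct adjacent vertices
  have hepos : 0 < H.edgeFinset.card := lt_of_lt_of_le hpos hcard
  obtain ⟨e, he⟩ := Finset.card_pos.mp hepos
  induction e with
  | _ x0 y0 =>
  rw [SimpleGraph.mem_edgeFinset, SimpleGraph.mem_edgeSet] at he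
  have hxy0 : x0 ≠ y0 := he.ne
  have hn2 : 2 ≤ n := by
    rw [← hn]
    haveI : Nontrivial W := ⟨x0, y0, hxy0⟩
    exact Fintype.one_lt_card
  by_cases hmin : ∃ v : W, H.degree v ≤ 1
  · obtain ⟨v, hv⟩ := hmin
    set s : Set W := {x | x ≠ v} with hs
    haveI : DecidablePred (· ∈ s) := fun x => Classical.dec _
    have hcards : Fintype.card s = n - 1 := by
      rw [← hn]
      rw [Fintype.card_subtype]
      rw [show Finset.filter (fun x => x ∈ s) Finset.univ = Finset.univ.erase v by
        ext y
        simp only [Finset.mem_filter, Finset.mem_erase, Finset.mem_univ, and_true, true_and,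
          hs, Set.mem_setOf_eq]]
      rw [Finset.card_erase_of_mem (Finset.mem_univ v), Finset.card_univ]
    have hdeg' : ∀ x : s, (H.induce s).degree x + (if H.Adj (x : W) v then 1 else 0)
        = H.degree (x : W) := by
      intro x
      rw [degree_induce]
      have hfe : (H.neighborFinset (x : W)).filter (· ∈ s)
          = (H.neighborFinset (x : W)).erase v := by
        ext y
        simp only [Finset.mem_filter, Finset.mem_erase, hs, Set.mem_setOf_eq]
        tauto
      rw [hfe]
      by_cases hadj : H.Adj (x : W) v
      · have hmemv : v ∈ H.neighborFinset (x : W) := by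
          rw [SimpleGraph.mem_neighborFinset]; exact hadj
        rw [if_pos hadj, Finset.card_erase_of_mem hmemv,
          ← SimpleGraph.card_neighborFinset_eq_degree]
        have : 0 < (H.neighborFinset (x : W)).card := Finset.card_pos.mpr ⟨v, hmemv⟩
        omega
      · have hmemv : v ∉ H.neighborFinset (x : W) := by
          rw [SimpleGraph.mem_neighborFinset]; exact hadj
        rw [if_neg hadj, Finset.erase_eq_of_notMem hmemv,
          SimpleGraph.card_neighborFinset_eq_degree]
        omega
    -- handshake counts
    have hsum1 : ∑ x : s, (H.induce s).degree x = 2 * (H.induce s).edgeFinset.card :=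
      SimpleGraph.sum_degrees_eq_twice_card_edges _
    have hsum2 : ∑ x : W, H.degree x = 2 * H.edgeFinset.card :=
      SimpleGraph.sum_degrees_eq_twice_card_edges _
    have hsub : ∀ (f : W → ℕ), ∑ x : s, f (x : W) = ∑ y ∈ Finset.univ.erase v, f y := by
      intro f
      rw [Finset.sum_subtype (p := (· ∈ s)) _ (fun x => by
        simp only [Finset.mem_erase, Finset.mem_univ, and_true, hs, Set.mem_setOf_eq])]
    have hite : ∑ y ∈ Finset.univ.erase v, (if H.Adj y v then 1 else 0) = H.degree v := by
      have hflt : Finset.filter (fun y => H.Adj y v) (Finset.univ.erase v)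
          = H.neighborFinset v := by
        ext y
        simp only [Finset.mem_filter, Finset.mem_erase, Finset.mem_univ, and_true, true_and,
          SimpleGraph.mem_neighborFinset]
        constructor
        · rintro ⟨-, h⟩; exact h.symm
        · intro h; exact ⟨fun hy => H.irrefl (hy ▸ h), h.symm⟩
      rw [Finset.sum_boole, hflt, SimpleGraph.card_neighborFinset_eq_degree]
      simp
    have hkey : 2 * (H.induce s).edgeFinset.card + H.degree v
        = ∑ y ∈ Finset.univ.erase v, H.degree y := by
      rw [← hsum1, ← hite, ← hsub (fun y => H.degree y),
        ← hsub (fun y => if H.Adj y v then 1 else 0), ← Finset.sum_add_distrib]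
      exact Finset.sum_congr rfl (fun x _ => hdeg' x)
    have htot : H.degree v + ∑ y ∈ Finset.univ.erase v, H.degree y = 2 * H.edgeFinset.card := by
      rw [← hsum2]
      exact Finset.add_sum_erase _ (fun y => H.degree y) (Finset.mem_univ v)
    have hecard : Fintype.card s ≤ (H.induce s).edgeFinset.card := by
      rw [hcards]
      have : Fintype.card W ≤ H.edgeFinset.card := hcard
      rw [hn] at this
      omega
    obtain ⟨x, c, hc⟩ := IH (n - 1) (by omega) s (H.induce s) hcards (by rw [hcards]; omega)
      hecard
    refine ⟨(x : W), c.map (SimpleGraph.Embedding.induce (G := H) s).toHom, ?_⟩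
    exact (SimpleGraph.Walk.map_isCycle_iff_of_injective
      (f := (SimpleGraph.Embedding.induce (G := H) s).toHom)
      (SimpleGraph.Embedding.induce (G := H) s).injective).mpr hc
  · push_neg at hmin
    exact exists_cycle_of_min_degree H he (fun z _ => hmin z)

/-- A triangle gives a 3-cycle. -/
lemma triangle_isCycle {x y z : V} (hxy : G.Adj x y) (hyz : G.Adj y z) (hxz : G.Adj x z) :
    (SimpleGraph.Walk.cons hxy (SimpleGraph.Walk.cons hyz
      (SimpleGraph.Walk.cons hxz.symm SimpleGraph.Walk.nil))).IsCycle := by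
  have h1 := hxy.ne
  have h2 := hyz.ne
  have h3 := hxz.ne
  constructor
  · constructor
    · rw [SimpleGraph.Walk.isTrail_def]
      simp only [SimpleGraph.Walk.edges_cons, SimpleGraph.Walk.edges_nil, List.nodup_cons,
        List.mem_cons, List.mem_singleton, List.not_mem_nil, not_false_iff, List.nodup_nil,
        and_true, Sym2.eq_iff]
      tauto
    · simp
  · simp only [SimpleGraph.Walk.support_cons, SimpleGraph.Walk.support_nil, List.tail_cons,
      List.nodup_cons, List.mem_cons, List.mem_singleton, List.not_mem_nil, not_false_iff,
      List.nodup_nil, and_true]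
    tauto

/-- A cubic graph on 4 vertices is `K₄`. -/
lemma cubic_card_four_iso_K4 {W : Type*} [Fintype W] [DecidableEq W] (H : SimpleGraph W)
    [DecidableRel H.Adj] (hcard : Fintype.card W = 4) (hcubic : ∀ v : W, H.degree v = 3) :
    Nonempty (H ≃g (⊤ : SimpleGraph (Fin 4))) := by
  have hadj : ∀ x y : W, x ≠ y → H.Adj x y := by
    intro x y hxy
    have hsub : H.neighborFinset x ⊆ Finset.univ.erase x := by
      intro z hz
      rw [SimpleGraph.mem_neighborFinset] at hz
      exact Finset.mem_erase.mpr ⟨hz.ne', Finset.mem_univ z⟩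
    have hcards : (Finset.univ.erase x).card ≤ (H.neighborFinset x).card := by
      rw [SimpleGraph.card_neighborFinset_eq_degree, hcubic,
        Finset.card_erase_of_mem (Finset.mem_univ x), Finset.card_univ, hcard]
    have := Finset.eq_of_subset_of_card_le hsub hcards
    have hy : y ∈ H.neighborFinset x := by
      rw [this]
      exact Finset.mem_erase.mpr ⟨hxy.symm, Finset.mem_univ y⟩
    rw [SimpleGraph.mem_neighborFinset] at hy
    exact hy
  refine ⟨⟨Fintype.equivFinOfCardEq hcard, ?_⟩⟩
  intro a b
  simp only [top_adj, ne_eq, EmbeddingLike.apply_eq_iff_eq]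
  constructor
  · intro h; exact hadj a b h
  · intro h; exact h.ne

/-- A triangle-free cubic graph on 6 vertices is `K₃,₃`. -/
lemma cubic_card_six_iso_K33 {W : Type*} [Fintype W] [DecidableEq W] (H : SimpleGraph W)
    [DecidableRel H.Adj] (hcard : Fintype.card W = 6) (hcubic : ∀ v : W, H.degree v = 3)
    (htri : ∀ x y z : W, H.Adj x y → H.Adj y z → H.Adj x z → False) :
    Nonempty (H ≃g completeBipartiteGraph (Fin 3) (Fin 3)) := by
  have hne : Nonempty W := Fintype.card_pos_iff.mp (by omega)
  obtain ⟨v0⟩ := hne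
  set A : Finset W := H.neighborFinset v0 with hA
  have hAcard : A.card = 3 := by rw [hA, SimpleGraph.card_neighborFinset_eq_degree]; exact hcubic v0
  have hv0A : v0 ∉ A := by rw [hA, SimpleGraph.mem_neighborFinset]; exact H.irrefl
  have hAA : ∀ a ∈ A, ∀ a' ∈ A, ¬H.Adj a a' := by
    intro a ha a' ha' hadj
    rw [hA, SimpleGraph.mem_neighborFinset] at ha ha'
    exact htri v0 a a' ha hadj ha'
  have hnb : ∀ a ∈ A, H.neighborFinset a = Aᶜ := by
    intro a ha
    have hsub : H.neighborFinset a ⊆ Aᶜ := by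
      intro z hz
      rw [SimpleGraph.mem_neighborFinset] at hz
      rw [Finset.mem_compl]
      exact fun hzA => hAA a ha z hzA hz
    apply Finset.eq_of_subset_of_card_le hsub
    rw [Finset.card_compl, hAcard, hcard, SimpleGraph.card_neighborFinset_eq_degree, hcubic]
  have hAB : ∀ a ∈ A, ∀ b, b ∉ A → H.Adj a b := by
    intro a ha b hb
    have : b ∈ H.neighborFinset a := by rw [hnb a ha]; exact Finset.mem_compl.mpr hb
    rw [SimpleGraph.mem_neighborFinset] at this
    exact this
  have hBB : ∀ b, b ∉ A → ∀ b', b' ∉ A → ¬H.Adj b b' := by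
    intro b hb b' hb' hadj
    obtain ⟨a, ha⟩ := Finset.card_pos.mp (by omega : 0 < A.card)
    exact htri a b b' (hAB a ha b hb) hadj (hAB a ha b' hb')
  -- build the equivalence
  have hcA : Fintype.card {x : W // x ∈ A} = 3 := by
    rw [Fintype.card_coe]; exact hAcard
  have hcB : Fintype.card {x : W // x ∉ A} = 3 := by
    rw [Fintype.card_subtype]
    have : Finset.filter (fun x => x ∉ A) Finset.univ = Aᶜ := by
      ext y; simp [Finset.mem_compl]
    rw [this, Finset.card_compl, hAcard, hcard]
  let e1 : {x : W // x ∈ A} ≃ Fin 3 := Fintype.equivFinOfCardEq hcA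
  let e2 : {x : W // x ∉ A} ≃ Fin 3 := Fintype.equivFinOfCardEq hcB
  let f : W ≃ (Fin 3 ⊕ Fin 3) :=
    (Equiv.sumCompl (· ∈ A)).symm.trans (Equiv.sumCongr e1 e2)
  refine ⟨⟨f, ?_⟩⟩
  intro a b
  by_cases ha : a ∈ A <;> by_cases hb : b ∈ A
  · rw [show f a = Sum.inl (e1 ⟨a, ha⟩) by
      simp [f, Equiv.sumCompl_symm_apply_of_pos ha]]
    rw [show f b = Sum.inl (e1 ⟨b, hb⟩) by
      simp [f, Equiv.sumCompl_symm_apply_of_pos hb]]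
    simp only [completeBipartiteGraph_adj, Sum.isLeft_inl, Sum.isRight_inl, Sum.isRight_inr]
    constructor
    · simp
    · intro h; exact absurd h (hAA a ha b hb)
  · rw [show f a = Sum.inl (e1 ⟨a, ha⟩) by
      simp [f, Equiv.sumCompl_symm_apply_of_pos ha]]
    rw [show f b = Sum.inr (e2 ⟨b, hb⟩) by
      simp [f, Equiv.sumCompl_symm_apply_of_neg hb]]
    simp only [completeBipartiteGraph_adj, Sum.isLeft_inl, Sum.isRight_inr, Sum.isRight_inl,
      Sum.isLeft_inr]
    constructor
    · intro _; exact hAB a ha b hb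
    · simp
  · rw [show f a = Sum.inr (e2 ⟨a, ha⟩) by
      simp [f, Equiv.sumCompl_symm_apply_of_neg ha]]
    rw [show f b = Sum.inl (e1 ⟨b, hb⟩) by
      simp [f, Equiv.sumCompl_symm_apply_of_pos hb]]
    simp only [completeBipartiteGraph_adj, Sum.isLeft_inl, Sum.isRight_inr, Sum.isRight_inl,
      Sum.isLeft_inr]
    constructor
    · intro _; exact (hAB b hb a ha).symm
    · simp
  · rw [show f a = Sum.inr (e2 ⟨a, ha⟩) by
      simp [f, Equiv.sumCompl_symm_apply_of_neg ha]]
    rw [show f b = Sum.inr (e2 ⟨b, hb⟩) by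
      simp [f, Equiv.sumCompl_symm_apply_of_neg hb]]
    simp only [completeBipartiteGraph_adj, Sum.isLeft_inr, Sum.isRight_inr, Sum.isRight_inl,
      Sum.isLeft_inl]
    constructor
    · simp
    · intro h; exact absurd h (hBB a ha b hb)


end Aux

/-- Let `G` be a connected cubic graph other than `K₄` and `K_{3,3}` (the theta graph,
having parallel edges, is not a simple graph), and let `C` be a shortest circuit of
`G`.  Then the set of edges with exactly one end on `C` is a cycle-separating edge cut:
after its removal both sides contain circuits — `C` itself is a circuit on one side,
and, as stated here, `G − V(C)` contains a circuit. -/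
theorem cut_around_shortest_cycle_is_cycleSeparating
    {V : Type*} [Fintype V] [DecidableEq V]
    (G : SimpleGraph V) [DecidableRel G.Adj]
    (hconn : G.Connected)
    (hcubic : ∀ v : V, G.degree v = 3)
    (hK4 : ¬ Nonempty (G ≃g (⊤ : SimpleGraph (Fin 4))))
    (hK33 : ¬ Nonempty (G ≃g completeBipartiteGraph (Fin 3) (Fin 3)))
    (u : V) (w : G.Walk u u) (hcyc : w.IsCycle)
    (hshort : (w.length : ℕ∞) = G.girth) :
    ∃ (x : {v : V // v ∉ w.support})
      (p : (G.induce {v : V | v ∉ w.support}).Walk x x), p.IsCycle := by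
  have hnacyc : ¬ G.IsAcyclic := fun h => h w hcyc
  have hL3 : 3 ≤ w.length := hcyc.three_le_length
  have hmin : ∀ (z : V) (d : G.Walk z z), d.IsCycle → w.length ≤ d.length := by
    intro z d hd
    have h1 : G.egirth ≤ (d.length : ℕ∞) := iInf₂_le_of_le z d (iInf_le _ hd)
    have h2 : (G.girth : ℕ∞) = G.egirth :=
      ENat.coe_toNat (fun htop => hnacyc (egirth_eq_top.mp htop))
    rw [← hshort] at h2
    rw [← h2] at h1
    exact_mod_cast h1
  set L := w.length with hLdef
  set Sf : Finset V := w.support.toFinset with hSfdef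
  have hSfmem : ∀ x, x ∈ Sf ↔ x ∈ w.support := fun x => List.mem_toFinset
  have hSfcard : Sf.card = L := by
    have h1 : Sf = w.support.tail.toFinset := by
      ext x
      rw [hSfmem x, List.mem_toFinset, mem_tail_support_of_closed hcyc.not_nil]
    rw [h1, List.toFinset_card_of_nodup hcyc.support_nodup, List.length_tail,
      SimpleGraph.Walk.length_support]
    omega
  -- a generic splitting fact for filters
  have hsplit : ∀ s : Finset V,
      (s.filter (· ∈ w.support)).card + (s.filter (· ∉ w.support)).card = s.card := by
    intro s
    exact Finset.card_filter_add_card_filter_not (· ∈ w.support)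
  have hcross2 : ∀ x ∈ Sf, ((G.neighborFinset x).filter (· ∈ w.support)).card = 2 := by
    intro x hx
    rw [hSfmem] at hx
    obtain ⟨a, b, hab, ha, hb, hadja, hadjb, huniq⟩ := two_nbrs_on_cycle hcyc hx
    have hset : (G.neighborFinset x).filter (· ∈ w.support) = {a, b} := by
      ext z
      simp only [Finset.mem_filter, SimpleGraph.mem_neighborFinset, Finset.mem_insert,
        Finset.mem_singleton]
      constructor
      · rintro ⟨hadj, hzs⟩
        exact huniq z (adj_support_mem_edges hcyc hmin hx hzs hadj)
      · rintro (rfl | rfl)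
        · exact ⟨hadja, ha⟩
        · exact ⟨hadjb, hb⟩
    rw [hset, Finset.card_insert_of_notMem (by simpa using hab), Finset.card_singleton]
  have hout1 : ∀ x ∈ Sf, ((G.neighborFinset x).filter (· ∉ w.support)).card = 1 := by
    intro x hx
    have h1 := hsplit (G.neighborFinset x)
    have h2 := hcross2 x hx
    have h3 : (G.neighborFinset x).card = 3 := by
      rw [SimpleGraph.card_neighborFinset_eq_degree]; exact hcubic x
    omega
  set T : Finset V := Finset.univ.filter (· ∉ w.support) with hTdef
  have hTmem : ∀ y, y ∈ T ↔ y ∉ w.support := by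
    intro y; rw [hTdef, Finset.mem_filter]; simp
  have hnT : Sf.card + T.card = Fintype.card V := by
    have h1 := hsplit Finset.univ
    have h2 : Finset.univ.filter (· ∈ w.support) = Sf := by
      ext x; rw [Finset.mem_filter, hSfmem x]; simp
    rw [h2] at h1
    rw [← Finset.card_univ]
    exact h1
  -- double counting cross edges
  have hX : ∑ y ∈ T, ((G.neighborFinset y).filter (· ∈ w.support)).card = Sf.card := by
    have lhs : ∀ y, (G.neighborFinset y).filter (· ∈ w.support)
        = Sf.filter (fun x => G.Adj y x) := by
      intro y
      ext z
      simp only [Finset.mem_filter, SimpleGraph.mem_neighborFinset, hSfmem z]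
      tauto
    have rhs : ∀ x, T.filter (fun y => G.Adj y x)
        = (G.neighborFinset x).filter (· ∉ w.support) := by
      intro x
      ext y
      simp only [Finset.mem_filter, SimpleGraph.mem_neighborFinset, hTmem y, Finset.mem_univ,
        true_and]
      constructor
      · rintro ⟨h1, h2⟩; exact ⟨h2.symm, h1⟩
      · rintro ⟨h1, h2⟩; exact ⟨h2, h1.symm⟩
    calc ∑ y ∈ T, ((G.neighborFinset y).filter (· ∈ w.support)).card
        = ∑ y ∈ T, (Sf.filter (fun x => G.Adj y x)).card := by
          exact Finset.sum_congr rfl (fun y _ => by rw [lhs y])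
      _ = ∑ y ∈ T, ∑ x ∈ Sf, (if G.Adj y x then 1 else 0) := by
          exact Finset.sum_congr rfl (fun y _ => by simpa using (Finset.sum_boole (fun x => G.Adj y x) Sf).symm)
      _ = ∑ x ∈ Sf, ∑ y ∈ T, (if G.Adj y x then 1 else 0) := Finset.sum_comm
      _ = ∑ x ∈ Sf, (T.filter (fun y => G.Adj y x)).card := by
          exact Finset.sum_congr rfl (fun x _ => by simpa using Finset.sum_boole (fun y => G.Adj y x) T)
      _ = ∑ x ∈ Sf, ((G.neighborFinset x).filter (· ∉ w.support)).card := by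
          exact Finset.sum_congr rfl (fun x _ => by rw [rhs x])
      _ = ∑ x ∈ Sf, 1 := Finset.sum_congr rfl (fun x hx => hout1 x hx)
      _ = Sf.card := by rw [Finset.sum_const, smul_eq_mul, mul_one]
  -- basic cardinality facts
  have h3n : 3 * Fintype.card V = 2 * G.edgeFinset.card := by
    have h1 := SimpleGraph.sum_degrees_eq_twice_card_edges G
    rw [Finset.sum_congr rfl (fun v _ => hcubic v), Finset.sum_const, smul_eq_mul,
      Finset.card_univ, mul_comm] at h1
    exact h1
  have hn4 : 4 ≤ Fintype.card V := by
    have h1 : (insert u (G.neighborFinset u)).card = 4 := by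
      rw [Finset.card_insert_of_notMem (by
        rw [SimpleGraph.mem_neighborFinset]; exact G.irrefl),
        SimpleGraph.card_neighborFinset_eq_degree, hcubic]
    rw [← h1, ← Finset.card_univ]
    exact Finset.card_le_univ _
  have hne4 : Fintype.card V ≠ 4 := fun h4 => hK4 (cubic_card_four_iso_K4 G h4 hcubic)
  have h2L : 2 * L ≤ Fintype.card V := by
    by_cases hL5 : 5 ≤ L
    · have hc1 : ∀ y ∈ T, ((G.neighborFinset y).filter (· ∈ w.support)).card ≤ 1 := by
        intro y hy
        by_contra hgt
        push_neg at hgt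
        obtain ⟨a, ha, b, hb, hab⟩ := Finset.one_lt_card.mp hgt
        rw [Finset.mem_filter, SimpleGraph.mem_neighborFinset] at ha hb
        exact no_two_nbrs_outside hcyc hmin hL5 ((hTmem y).mp hy) ha.2 hb.2 hab ha.1 hb.1
      have h1 : Sf.card ≤ T.card := by
        rw [← hX]
        calc ∑ y ∈ T, ((G.neighborFinset y).filter (· ∈ w.support)).card
            ≤ ∑ y ∈ T, 1 := Finset.sum_le_sum hc1
          _ = T.card := by rw [Finset.sum_const, smul_eq_mul, mul_one]
      omega
    · by_cases hL4 : L = 4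
      · have hne6 : Fintype.card V ≠ 6 := by
          intro h6
          apply hK33
          apply cubic_card_six_iso_K33 G h6 hcubic
          intro x y z hxy hyz hxz
          have h1 := hmin x _ (triangle_isCycle hxy hyz hxz)
          simp only [SimpleGraph.Walk.length_cons, SimpleGraph.Walk.length_nil] at h1
          omega
        omega
      · have hL3' : L = 3 := by omega
        omega
  -- the induced graph on the complement of the cycle
  set Sc : Set V := {v : V | v ∉ w.support} with hScdef
  haveI hdecSc : DecidablePred (· ∈ Sc) := fun v => Classical.dec _
  have hScmem : ∀ v : V, v ∈ Sc ↔ v ∉ w.support := fun v => Iff.rfl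
  have hScT : Fintype.card Sc = T.card := by
    rw [Fintype.card_subtype]
    congr 1
    ext x
    rw [Finset.mem_filter, hTmem x]
    simp only [Finset.mem_univ, true_and]
    exact hScmem x
  have hdegind : ∀ v : Sc, (G.induce Sc).degree v
      + ((G.neighborFinset (v : V)).filter (· ∈ w.support)).card = 3 := by
    intro v
    rw [degree_induce]
    have h1 : (G.neighborFinset (v : V)).filter (· ∈ Sc)
        = (G.neighborFinset (v : V)).filter (· ∉ w.support) := by
      ext z
      rw [Finset.mem_filter, Finset.mem_filter]
      exact and_congr_right (fun _ => hScmem z)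
    rw [h1]
    have h2 := hsplit (G.neighborFinset (v : V))
    have h3 : (G.neighborFinset (v : V)).card = 3 := by
      rw [SimpleGraph.card_neighborFinset_eq_degree]; exact hcubic (v : V)
    omega
  have hsum : ∑ v : Sc, (G.induce Sc).degree v = 2 * (G.induce Sc).edgeFinset.card :=
    SimpleGraph.sum_degrees_eq_twice_card_edges _
  have hsubsum : ∀ f : V → ℕ, ∑ v : Sc, f (v : V) = ∑ y ∈ T, f y := by
    intro f
    rw [Finset.sum_subtype (p := (· ∈ Sc)) _ (fun x => by
      rw [hTmem x]; exact Iff.rfl)]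
  have hkey : 2 * (G.induce Sc).edgeFinset.card + Sf.card = 3 * T.card := by
    have h1 : ∑ v : Sc, ((G.induce Sc).degree v
        + ((G.neighborFinset (v : V)).filter (· ∈ w.support)).card) = ∑ v : Sc, 3 :=
      Finset.sum_congr rfl (fun v _ => hdegind v)
    rw [Finset.sum_add_distrib, hsum, Finset.sum_const, smul_eq_mul, mul_comm,
      Finset.card_univ, hScT] at h1
    rw [hsubsum (fun y => ((G.neighborFinset y).filter (· ∈ w.support)).card), hX] at h1
    omega
  have hTL : L ≤ T.card := by omega
  have hpos : 0 < Fintype.card Sc := by rw [hScT]; omega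
  have hcard : Fintype.card Sc ≤ (G.induce Sc).edgeFinset.card := by
    rw [hScT]; omega
  obtain ⟨x, c, hc⟩ := exists_cycle_of_card_le_edges_aux (Fintype.card Sc) Sc
    (G.induce Sc) rfl hpos hcard
  exact ⟨x, c, hc⟩
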